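/- Let γ_0(s) = (sin(πs/β))^{−β/π} e^{is} for 0 < s < β, where 0 < β ≤ π. Then the Lagrangian angle of the associated equivariant Lagrangian surface L_0 in C^2 is θ_0(s) = (2 − π/β) s + π. In particular, the oscillation of θ_0 on (0, β) equals |2β − π|. -/

import Mathlib

open Real Set

lemma image_affine_Ioo_neg {a b c d : ℝ} (h : a < 0) :
    (fun s => a * s + b) '' Ioo c d = Ioo (a * d + b) (a * c + b) := by
  ext x
  simp only [mem_image, mem_Ioo]
  constructor
  · rintro ⟨s, ⟨hs1, hs2⟩, rfl⟩
    constructor <;> nlinarith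
  · rintro ⟨h1, h2⟩
    refine ⟨(x - b) / a, ⟨?_, ?_⟩, ?_⟩
    · rw [lt_div_iff_of_neg h]; nlinarith
    · rw [div_lt_iff_of_neg h]; nlinarith
    · rw [mul_div_assoc', mul_comm, mul_div_assoc, div_self h.ne, mul_one]; ring

theorem stmt_3 (β : ℝ) (hβ : 0 < β) (hβ' : β ≤ π)
    (r : ℝ → ℝ) (hr : ∀ s, r s = Real.rpow (Real.sin (π * s / β)) (-(β / π)))
    (θ : ℝ → ℝ) (hθ : ∀ s, θ s = 2 * s
      + Complex.arg (Complex.ofReal (deriv r s) + Complex.ofReal (r s) * Complex.I)) :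
    (∀ s ∈ Ioo 0 β, θ s = (2 - π / β) * s + π)
    ∧ sSup (θ '' Ioo 0 β) - sInf (θ '' Ioo 0 β) = |2 * β - π| := by
  have hπ := Real.pi_pos
  have key : ∀ s ∈ Ioo 0 β, θ s = (2 - π / β) * s + π := by
    rintro s ⟨hs0, hsβ⟩
    set t := π * s / β with ht
    have ht0 : 0 < t := by positivity
    have htπ : t < π := by
      rw [ht, div_lt_iff₀ hβ]
      nlinarith
    have hsin : 0 < Real.sin t := Real.sin_pos_of_pos_of_lt_pi ht0 htπ
    -- derivative
    have hfun : r = fun x => Real.sin (π * x / β) ^ (-(β / π)) := by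
      funext x; rw [hr x]; rfl
    have hd1 : HasDerivAt (fun x : ℝ => π * x / β) (π / β) s := by
      simpa using ((hasDerivAt_id s).const_mul π).div_const β
    have hd2 : HasDerivAt (fun x : ℝ => Real.sin (π * x / β))
        (Real.cos t * (π / β)) s := hd1.sin
    have hd3 : HasDerivAt r
        (Real.cos t * (π / β) * (-(β / π)) * Real.sin (π * s / β) ^ (-(β / π) - 1)) s := by
      rw [hfun]
      exact hd2.rpow_const (Or.inl hsin.ne')
    have hderiv : deriv r s = -(Real.sin t ^ (-(β / π) - 1) * Real.cos t) := by
      rw [hd3.deriv, ← ht]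
      field_simp
    set c := Real.sin t ^ (-(β / π) - 1) with hc
    have hcpos : 0 < c := Real.rpow_pos_of_pos hsin _
    have hrs : r s = c * Real.sin t := by
      rw [hfun]
      dsimp only
      rw [← ht, show -(β / π) = (-(β / π) - 1) + 1 by ring, Real.rpow_add hsin,
        Real.rpow_one, hc]
    have harg : Complex.arg (Complex.ofReal (deriv r s) + Complex.ofReal (r s) * Complex.I)
        = π - t := by
      have he : Complex.ofReal (deriv r s) + Complex.ofReal (r s) * Complex.I
          = (c : ℂ) * (Complex.cos ((π - t : ℝ)) + Complex.sin ((π - t : ℝ)) * Complex.I) := by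
        rw [hderiv, hrs]
        push_cast
        rw [Complex.cos_pi_sub, Complex.sin_pi_sub]
        ring
      rw [he, Complex.arg_real_mul _ hcpos]
      exact Complex.arg_cos_add_sin_mul_I ⟨by linarith, by linarith⟩
    rw [hθ s, harg, ht]
    field_simp
    ring
  refine ⟨key, ?_⟩
  have himg : θ '' Ioo 0 β = (fun s => (2 - π / β) * s + π) '' Ioo 0 β :=
    Set.image_congr key
  set a := 2 - π / β with ha
  have haβ : a * β = 2 * β - π := by rw [ha, sub_mul, div_mul_cancel₀ π hβ.ne']
  rw [himg]
  rcases lt_trichotomy a 0 with h | h | h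
  · rw [image_affine_Ioo_neg h]
    have hlt : a * β + π < a * 0 + π := by nlinarith
    rw [csSup_Ioo hlt, csInf_Ioo hlt]
    rw [abs_of_neg (by linarith [haβ] : 2 * β - π < 0)]
    linarith [haβ]
  · have : (fun s => a * s + π) = fun _ : ℝ => π := by
      funext x; rw [h]; ring
    rw [this]
    rw [Set.Nonempty.image_const ⟨β / 2, by constructor <;> linarith⟩]
    rw [csSup_singleton, csInf_singleton]
    have : 2 * β - π = 0 := by rw [← haβ, h]; ring
    rw [this, abs_zero, sub_self]
  · rw [Set.image_affine_Ioo h π 0 β]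
    have hlt : a * 0 + π < a * β + π := by nlinarith
    rw [csSup_Ioo hlt, csInf_Ioo hlt]
    rw [abs_of_pos (by linarith [haβ] : 0 < 2 * β - π)]
    linarith [haβ]
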